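/- If (X,d) is a complete and locally compact metric space, then every d_0-ball B_{d_0}(p;r) is d-precompact. -/

import Mathlib

open Filter Set
open scoped ENNReal

variable {X : Type*}

/-- The length of the chain `x 0, x 1, …, x n` with respect to the distance `ρ`. -/
noncomputable def chainLengthOf (ρ : X → X → ℝ≥0∞) (x : ℕ → X) (n : ℕ) : ℝ≥0∞ :=
  ∑ k ∈ Finset.range n, ρ (x k) (x (k + 1))

/-- `x 0, …, x n` is an `ε`-chain from `p` to `q` with respect to `ρ`. -/
def IsChainOf (ρ : X → X → ℝ≥0∞) (ε : ℝ≥0∞) (p q : X) (x : ℕ → X) (n : ℕ) : Prop :=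
  x 0 = p ∧ x n = q ∧ ∀ k < n, ρ (x k) (x (k + 1)) ≤ ε

/-- `d_ε`: the infimum of lengths of `ε`-chains joining `p` to `q`. -/
noncomputable def chainDistOf (ρ : X → X → ℝ≥0∞) (ε : ℝ≥0∞) (p q : X) : ℝ≥0∞ :=
  ⨅ (n : ℕ) (x : ℕ → X) (_ : IsChainOf ρ ε p q x n), chainLengthOf ρ x n

/-- `d_0 = sup_{ε > 0} d_ε`. -/
noncomputable def chainMetricOf (ρ : X → X → ℝ≥0∞) (p q : X) : ℝ≥0∞ :=
  ⨆ (ε : ℝ≥0∞) (_ : 0 < ε), chainDistOf ρ ε p q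

/-- `d_ε` for a metric space, with `ρ = edist`. -/
noncomputable def chainDist [PseudoEMetricSpace X] (ε : ℝ≥0∞) (p q : X) : ℝ≥0∞ :=
  chainDistOf (fun a b => edist a b) ε p q

/-- `d_0` for a metric space, with `ρ = edist`. -/
noncomputable def chainMetric [PseudoEMetricSpace X] (p q : X) : ℝ≥0∞ :=
  chainMetricOf (fun a b => edist a b) p q

/-- The length of a path `γ : [0,1] → X` with respect to `ρ`:
the supremum over partitions `0 = t 0 ≤ t 1 ≤ … ≤ t n = 1` of the partition sums. -/
noncomputable def pathLengthOf (ρ : X → X → ℝ≥0∞) (γ : ℝ → X) : ℝ≥0∞ :=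
  ⨆ (n : ℕ) (t : ℕ → ℝ) (_ : t 0 = 0 ∧ t n = 1 ∧ Monotone t),
    ∑ k ∈ Finset.range n, ρ (γ (t k)) (γ (t (k + 1)))

noncomputable def pathLength [PseudoEMetricSpace X] (γ : ℝ → X) : ℝ≥0∞ :=
  pathLengthOf (fun a b => edist a b) γ

/-- Continuity of a path `γ` on `[0,1]` with respect to the distance `ρ`. -/
def ContinuousWrt (ρ : X → X → ℝ≥0∞) (γ : ℝ → X) : Prop :=
  ∀ t ∈ Icc (0 : ℝ) 1,
    Tendsto (fun s => ρ (γ s) (γ t)) (nhdsWithin t (Icc (0 : ℝ) 1)) (nhds 0)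

/-- The induced length metric with respect to `ρ`: the infimum of `ρ`-lengths of
`ρ`-continuous paths joining `p` to `q`. -/
noncomputable def lengthMetricOf (ρ : X → X → ℝ≥0∞) (p q : X) : ℝ≥0∞ :=
  ⨅ (γ : ℝ → X) (_ : ContinuousWrt ρ γ ∧ γ 0 = p ∧ γ 1 = q), pathLengthOf ρ γ

/-- The induced length metric `d̄` of a metric space. -/
noncomputable def lengthMetric [PseudoEMetricSpace X] (p q : X) : ℝ≥0∞ :=
  lengthMetricOf (fun a b => edist a b) p q

section ChainAux

variable [MetricSpace X]

private lemma edist_le_sum_Ico (x : ℕ → X) : ∀ a b : ℕ, a ≤ b →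
    edist (x a) (x b) ≤ ∑ j ∈ Finset.Ico a b, edist (x j) (x (j+1)) := by
  intro a b hab
  induction b, hab using Nat.le_induction with
  | base => simp
  | succ b hab ih =>
      calc edist (x a) (x (b+1)) ≤ edist (x a) (x b) + edist (x b) (x (b+1)) :=
            edist_triangle _ _ _
      _ ≤ (∑ j ∈ Finset.Ico a b, edist (x j) (x (j+1))) + edist (x b) (x (b+1)) := by
            gcongr
      _ = ∑ j ∈ Finset.Ico a (b+1), edist (x j) (x (j+1)) := by
            rw [Finset.sum_Ico_succ_top hab]

private lemma chainDist_le_length {ε : ℝ≥0∞} {p q : X} {x : ℕ → X} {n : ℕ}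
    (h : IsChainOf (fun a b => edist a b) ε p q x n) :
    chainDist ε p q ≤ chainLengthOf (fun a b => edist a b) x n := by
  simp only [chainDist, chainDistOf]
  exact iInf_le_of_le n (iInf_le_of_le x (iInf_le _ h))

private lemma edist_le_chainDist (ε : ℝ≥0∞) (p q : X) : edist p q ≤ chainDist ε p q := by
  simp only [chainDist, chainDistOf]
  refine le_iInf fun n => le_iInf fun x => le_iInf fun h => ?_
  obtain ⟨h0, hn, -⟩ := h
  calc edist p q = edist (x 0) (x n) := by rw [h0, hn]
  _ ≤ ∑ j ∈ Finset.Ico 0 n, edist (x j) (x (j+1)) := edist_le_sum_Ico x 0 n (Nat.zero_le n)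
  _ = chainLengthOf (fun a b => edist a b) x n := by
      rw [chainLengthOf, Finset.range_eq_Ico]

private lemma chainDist_anti {ε₁ ε₂ : ℝ≥0∞} (h : ε₁ ≤ ε₂) (p q : X) :
    chainDist ε₂ p q ≤ chainDist ε₁ p q := by
  conv_rhs => rw [chainDist, chainDistOf]
  refine le_iInf fun n => le_iInf fun x => le_iInf fun hc => ?_
  exact chainDist_le_length ⟨hc.1, hc.2.1, fun k hk => (hc.2.2 k hk).trans h⟩

private lemma chainDist_le_chainMetric {ε : ℝ≥0∞} (hε : 0 < ε) (p q : X) :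
    chainDist ε p q ≤ chainMetric p q := by
  rw [chainMetric, chainMetricOf]
  exact le_iSup₂ (f := fun ε (_ : 0 < ε) => chainDistOf (fun a b => edist a b) ε p q) ε hε

private lemma chain_approach {p q : X} {ε s β : ℝ≥0∞} (hε : 0 < ε) (hs : 0 < s)
    (hstop : s ≠ ⊤) (h : chainDist ε p q < s + β) :
    ∃ x', chainDist ε p x' < s ∧ edist x' q < β + ε := by
  classical
  rw [chainDist, chainDistOf] at h
  simp only [iInf_lt_iff] at h
  obtain ⟨n, x, hc, hlen⟩ := h
  set ρ : X → X → ℝ≥0∞ := fun a b => edist a b with hρ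
  set L : ℕ → ℝ≥0∞ := fun k => chainLengthOf ρ x k with hL
  set k₀ := Nat.findGreatest (fun k => L k < s) n with hk₀
  have hP0 : L 0 < s := by simpa [hL, chainLengthOf] using hs
  have hPk : L k₀ < s := by
    have := Nat.findGreatest_spec (P := fun k => L k < s) (Nat.zero_le n) hP0
    simpa [hk₀] using this
  have hk₀n : k₀ ≤ n := Nat.findGreatest_le n
  rcases eq_or_lt_of_le hk₀n with heq | hlt
  · refine ⟨q, ?_, ?_⟩
    · have : chainDist ε p q ≤ L n := chainDist_le_length hc
      exact this.trans_lt (by rw [← heq]; exact hPk)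
    · simpa using lt_of_lt_of_le hε le_add_self
  · have hnot : ¬ L (k₀ + 1) < s :=
      Nat.findGreatest_is_greatest (Nat.lt_succ_self k₀) hlt
    have hsle : s ≤ L (k₀ + 1) := not_lt.mp hnot
    have hstep : L (k₀ + 1) ≤ L k₀ + ε := by
      have : L (k₀ + 1) = L k₀ + edist (x k₀) (x (k₀ + 1)) := by
        simp [hL, hρ, chainLengthOf, Finset.sum_range_succ]
      rw [this]
      exact add_le_add le_rfl (hc.2.2 k₀ hlt)
    have hLfin : L k₀ ≠ ⊤ := (hPk.trans_le le_top).ne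
    have htrunc : chainDist ε p (x k₀) ≤ L k₀ :=
      chainDist_le_length ⟨hc.1, rfl, fun k hk => hc.2.2 k (hk.trans hlt)⟩
    have hsum : L k₀ + ∑ j ∈ Finset.Ico k₀ n, edist (x j) (x (j+1)) = L n := by
      simp only [hL, chainLengthOf, Finset.range_eq_Ico]
      exact Finset.sum_Ico_consecutive _ (Nat.zero_le _) hk₀n
    have hkey : L k₀ + edist (x k₀) q < L k₀ + (β + ε) := by
      calc L k₀ + edist (x k₀) q
          ≤ L k₀ + ∑ j ∈ Finset.Ico k₀ n, edist (x j) (x (j+1)) := by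
            gcongr
            rw [hc.2.1.symm]
            exact edist_le_sum_Ico x k₀ n hk₀n
      _ = L n := hsum
      _ < s + β := hlen
      _ ≤ (L k₀ + ε) + β := by gcongr; exact hsle.trans hstep
      _ = L k₀ + (β + ε) := by ring
    exact ⟨x k₀, htrunc.trans_lt hPk,
      (ENNReal.add_lt_add_iff_left hLfin).mp hkey⟩

private def UU (p : X) (ε s : ℝ≥0∞) : Set X := {y | chainDist ε p y < s}

private lemma UU_anti {p : X} {ε₁ ε₂ s : ℝ≥0∞} (h : ε₁ ≤ ε₂) : UU p ε₁ s ⊆ UU p ε₂ s :=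
  fun y hy => (chainDist_anti h p y).trans_lt hy

private lemma UU_mono {p : X} {ε s₁ s₂ : ℝ≥0∞} (h : s₁ ≤ s₂) : UU p ε s₁ ⊆ UU p ε s₂ :=
  fun y hy => hy.trans_le h

private def PP (p : X) (s : ℝ) : Prop :=
  ∀ η : ℝ, 0 < η → ∃ ε : ℝ≥0∞, 0 < ε ∧ ∃ N : Set X, N.Finite ∧
    UU p ε (ENNReal.ofReal s) ⊆ ⋃ y ∈ N, Metric.ball y η

private lemma PP_mono {p : X} {s s' : ℝ} (h : s' ≤ s) (hP : PP p s) : PP p s' := by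
  intro η hη
  obtain ⟨ε, hε, N, hNf, hNc⟩ := hP η hη
  exact ⟨ε, hε, N, hNf, (UU_mono (ENNReal.ofReal_le_ofReal h)).trans hNc⟩

private lemma PP_of_subset_compact {p : X} {s : ℝ} {ε : ℝ≥0∞} {C : Set X}
    (hC : IsCompact C) (hε : 0 < ε) (hsub : UU p ε (ENNReal.ofReal s) ⊆ C) : PP p s := by
  intro η hη
  obtain ⟨N, hNf, hNc⟩ := Metric.totallyBounded_iff.mp hC.totallyBounded η hη
  exact ⟨ε, hε, N, hNf, hsub.trans hNc⟩

private lemma PP_base [LocallyCompactSpace X] (p : X) :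
    ∃ s₀ : ℝ, 0 < s₀ ∧ PP p s₀ := by
  obtain ⟨C, hCc, hCn⟩ := exists_compact_mem_nhds p
  obtain ⟨s₀, hs₀, hball⟩ := Metric.nhds_basis_closedBall.mem_iff.mp hCn
  refine ⟨s₀, hs₀, PP_of_subset_compact
    (hCc.of_isClosed_subset Metric.isClosed_closedBall hball) one_pos ?_⟩
  intro y hy
  have h1 : edist p y < ENNReal.ofReal s₀ := (edist_le_chainDist 1 p y).trans_lt hy
  have : dist y p < s₀ := by rw [dist_comm]; exact edist_lt_ofReal.mp h1
  exact Metric.mem_closedBall.mpr this.le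

private lemma PP_limit [LocallyCompactSpace X] {p : X} {g : ℝ} (hg : 0 < g)
    (h : ∀ s : ℝ, s < g → PP p s) : PP p g := by
  intro η hη
  set β : ℝ := min (η / 4) (g / 2) with hβdef
  have hβ : 0 < β := lt_min (by linarith) (by linarith)
  have hβη : β ≤ η / 4 := min_le_left _ _
  set s : ℝ := g - β with hsdef
  have hs : 0 < s := by
    have : β ≤ g / 2 := min_le_right _ _
    simp only [hsdef]; linarith
  obtain ⟨ε₁, hε₁, N, hNf, hNc⟩ := h s (by simp only [hsdef]; linarith) β hβ
  refine ⟨min ε₁ (ENNReal.ofReal β), lt_min hε₁ (ENNReal.ofReal_pos.mpr hβ), N, hNf, ?_⟩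
  intro q hq
  set ε := min ε₁ (ENNReal.ofReal β) with hεdef
  have hεpos : 0 < ε := lt_min hε₁ (ENNReal.ofReal_pos.mpr hβ)
  have hq' : chainDist ε p q < ENNReal.ofReal s + ENNReal.ofReal β := by
    rw [← ENNReal.ofReal_add hs.le hβ.le]
    have : s + β = g := by simp [hsdef]
    rw [this]; exact hq
  obtain ⟨x', hx's, hx'q⟩ := chain_approach hεpos (ENNReal.ofReal_pos.mpr hs)
    ENNReal.ofReal_ne_top hq'
  have hx'N : x' ∈ ⋃ y ∈ N, Metric.ball y β :=
    hNc (UU_anti (min_le_left _ _) hx's)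
  obtain ⟨y, hyN, hxy⟩ := Set.mem_iUnion₂.mp hx'N
  refine Set.mem_iUnion₂.mpr ⟨y, hyN, ?_⟩
  have hd1 : dist x' q < 2 * β := by
    have : edist x' q < ENNReal.ofReal (2 * β) := by
      refine hx'q.trans_le ?_
      rw [two_mul, ENNReal.ofReal_add hβ.le hβ.le]
      exact add_le_add le_rfl (min_le_right _ _)
    exact edist_lt_ofReal.mp this
  have : dist q y < 3 * β := by
    have := Metric.mem_ball.mp hxy
    have h2 := dist_triangle q x' y
    rw [dist_comm q x'] at h2
    linarith
  have : dist q y < η := by linarith [hβη]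
  exact Metric.mem_ball.mpr this

private lemma PP_open [CompleteSpace X] [LocallyCompactSpace X] {p : X} {s : ℝ}
    (hs : 0 < s) (h : PP p s) : ∃ δ : ℝ, 0 < δ ∧ PP p (s + δ) := by
  classical
  -- choose nets at scales (1/2)^n
  choose e he N hNf hNc using fun n : ℕ => h ((1/2 : ℝ)^n) (by positivity)
  -- decreasing positive ε's
  set E : ℕ → ℝ≥0∞ := fun n => (Finset.range (n+1)).inf e with hE
  have hEpos : ∀ n, 0 < E n := fun n =>
    (Finset.lt_inf_iff (by simp : (0:ℝ≥0∞) < ⊤)).mpr fun b _ => he b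
  have hEanti : ∀ {m n : ℕ}, m ≤ n → E n ≤ E m := fun {m n} hmn =>
    Finset.inf_mono (Finset.range_subset_range.mpr (by omega))
  have hEle : ∀ n, E n ≤ e n := fun n => Finset.inf_le (Finset.self_mem_range_succ n)
  set A : ℕ → Set X := fun n => closure (UU p (E n) (ENNReal.ofReal s)) with hA
  have hAanti : ∀ {m n : ℕ}, m ≤ n → A n ⊆ A m := fun {m n} hmn =>
    closure_mono (UU_anti (hEanti hmn))
  have hAcl : ∀ n, IsClosed (A n) := fun n => isClosed_closure
  have hAcov : ∀ n, A n ⊆ ⋃ y ∈ N n, Metric.closedBall y ((1/2)^n) := by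
    intro n
    refine closure_minimal ?_ ?_
    · exact ((UU_anti (hEle n)).trans (hNc n)).trans
        (Set.iUnion₂_mono fun y _ => Metric.ball_subset_closedBall)
    · exact (hNf n).isClosed_biUnion fun y _ => Metric.isClosed_closedBall
  set K : Set X := ⋂ n, A n with hK
  have hKcl : IsClosed K := isClosed_iInter hAcl
  have hKtb : TotallyBounded K := by
    rw [Metric.totallyBounded_iff]
    intro η hη
    obtain ⟨n, hn⟩ := exists_pow_lt_of_lt_one hη (by norm_num : (1/2:ℝ) < 1)
    refine ⟨N n, hNf n, ?_⟩
    refine (Set.iInter_subset A n).trans ((hAcov n).trans (Set.iUnion₂_mono fun y _ => ?_))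
    exact Metric.closedBall_subset_ball hn
  have hKc : IsCompact K := hKtb.isCompact_of_isClosed hKcl
  -- Hausdorff approximation of A n by K
  have haus : ∀ α : ℝ, 0 < α → ∃ m, ∀ x ∈ A m, EMetric.infEdist x K ≤ ENNReal.ofReal α := by
    intro α hα
    by_contra hcon
    push_neg at hcon
    choose x hxA hxfar using hcon
    have hmap : (Filter.map x Filter.atTop).NeBot := Filter.map_neBot
    set G : Ultrafilter X := Ultrafilter.of (Filter.map x Filter.atTop) with hG
    have hGle : (G : Filter X) ≤ Filter.map x Filter.atTop := Ultrafilter.of_le _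
    have hAG : ∀ m, A m ∈ G := by
      intro m
      refine hGle (Filter.mem_map.mpr (Filter.mem_of_superset (Filter.Ici_mem_atTop m) ?_))
      intro n hn
      exact hAanti hn (hxA n)
    have hcauchy : Cauchy (G : Filter X) := by
      rw [EMetric.cauchy_iff]
      refine ⟨G.neBot.ne, fun ε hε => ?_⟩
      obtain ⟨c, hc0, hc1, hc2⟩ := ENNReal.lt_iff_exists_real_btwn.mp hε
      have hc0' : 0 < c := ENNReal.ofReal_pos.mp (by simpa using hc1)
      obtain ⟨m, hm⟩ := exists_pow_lt_of_lt_one (by linarith : 0 < c / 2)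
        (by norm_num : (1/2:ℝ) < 1)
      have hball : ∃ y ∈ N m, Metric.closedBall y ((1/2)^m) ∈ G := by
        rw [← Ultrafilter.finite_biUnion_mem_iff (hNf m)]
        exact Filter.mem_of_superset (hAG m) (hAcov m)
      obtain ⟨y, -, hyG⟩ := hball
      refine ⟨_, hyG, fun a ha b hb => ?_⟩
      have : dist a b < c := by
        have h1 := Metric.mem_closedBall.mp ha
        have h2 := Metric.mem_closedBall.mp hb
        have := dist_triangle a y b
        rw [dist_comm y b] at this
        linarith
      calc edist a b = ENNReal.ofReal (dist a b) := edist_dist a b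
      _ < ENNReal.ofReal c := (ENNReal.ofReal_lt_ofReal_iff hc0').mpr this
      _ < ε := hc2
    obtain ⟨z, hz⟩ := CompleteSpace.complete hcauchy
    have hzK : z ∈ K := by
      refine Set.mem_iInter.mpr fun m => ?_
      have h1 : (G : Filter X) ≤ nhds z ⊓ Filter.principal (A m) :=
        le_inf hz (Filter.le_principal_iff.mpr (hAG m))
      have h2 : ClusterPt z (Filter.principal (A m)) :=
        ClusterPt.mono (ClusterPt.of_le_nhds hz) (Filter.le_principal_iff.mpr (hAG m))
      exact (hAcl m).closure_eq ▸ mem_closure_iff_clusterPt.mpr h2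
    have hzfar : ENNReal.ofReal α ≤ EMetric.infEdist z K := by
      have hset : {w : X | ENNReal.ofReal α ≤ EMetric.infEdist w K} ∈ G := by
        refine hGle (Filter.mem_map.mpr (Filter.eventually_atTop.mpr ⟨0, fun n _ => ?_⟩))
        exact (hxfar n).le
      have hcl : IsClosed {w : X | ENNReal.ofReal α ≤ EMetric.infEdist w K} :=
        isClosed_le continuous_const EMetric.continuous_infEdist
      have h2 : ClusterPt z (Filter.principal {w : X | ENNReal.ofReal α ≤ EMetric.infEdist w K}) :=
        ClusterPt.mono (ClusterPt.of_le_nhds hz) (Filter.le_principal_iff.mpr hset)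
      have : z ∈ {w : X | ENNReal.ofReal α ≤ EMetric.infEdist w K} :=
        hcl.closure_eq ▸ mem_closure_iff_clusterPt.mpr h2
      exact this
    have hz0 : EMetric.infEdist z K = 0 := EMetric.infEdist_zero_of_mem hzK
    rw [hz0] at hzfar
    exact absurd (nonpos_iff_eq_zero.mp hzfar) (ENNReal.ofReal_pos.mpr hα).ne'
  -- local compactness around K
  obtain ⟨C, hCc, hKint⟩ := exists_compact_superset hKc
  obtain ⟨δ₀, hδ₀, hthick⟩ := hKc.exists_thickening_subset_open isOpen_interior hKint
  set C' : Set X := Metric.cthickening (δ₀/2) K with hC'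
  have hC'c : IsCompact C' := by
    refine hCc.of_isClosed_subset Metric.isClosed_cthickening ?_
    exact (Metric.cthickening_subset_thickening' hδ₀ (by linarith) K).trans
      (hthick.trans interior_subset)
  obtain ⟨m, hm⟩ := haus (δ₀/8) (by linarith)
  set ε' : ℝ≥0∞ := min (E m) (ENNReal.ofReal (δ₀/8)) with hε'
  have hε'pos : 0 < ε' := lt_min (hEpos m) (ENNReal.ofReal_pos.mpr (by linarith))
  refine ⟨δ₀/8, by linarith, PP_of_subset_compact hC'c hε'pos ?_⟩
  intro q hq
  have hq' : chainDist ε' p q < ENNReal.ofReal s + ENNReal.ofReal (δ₀/8) := by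
    rw [← ENNReal.ofReal_add hs.le (by linarith)]
    exact hq
  obtain ⟨x', hx's, hx'q⟩ := chain_approach hε'pos (ENNReal.ofReal_pos.mpr hs)
    ENNReal.ofReal_ne_top hq'
  have hx'A : x' ∈ A m := subset_closure (UU_anti (min_le_left _ _) hx's)
  have hx'K : EMetric.infEdist x' K ≤ ENNReal.ofReal (δ₀/8) := hm x' hx'A
  have hqK : EMetric.infEdist q K ≤ ENNReal.ofReal (δ₀/2) := by
    calc EMetric.infEdist q K ≤ edist q x' + EMetric.infEdist x' K :=
          EMetric.infEdist_le_edist_add_infEdist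
    _ ≤ (ENNReal.ofReal (δ₀/8) + ε') + ENNReal.ofReal (δ₀/8) := by
        rw [edist_comm]; exact add_le_add hx'q.le hx'K
    _ ≤ (ENNReal.ofReal (δ₀/8) + ENNReal.ofReal (δ₀/8)) + ENNReal.ofReal (δ₀/8) := by
        gcongr; exact min_le_right _ _
    _ ≤ ENNReal.ofReal (δ₀/2) := by
        rw [← ENNReal.ofReal_add (by linarith) (by linarith),
          ← ENNReal.ofReal_add (by linarith) (by linarith)]
        exact ENNReal.ofReal_le_ofReal (by linarith)
  exact Metric.mem_cthickening_iff.mpr hqK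

private lemma PP_all [CompleteSpace X] [LocallyCompactSpace X] (p : X) (s : ℝ) : PP p s := by
  by_contra hbad
  set Bad : Set ℝ := {t | ¬ PP p t} with hBad
  obtain ⟨s₀, hs₀, hPs₀⟩ := PP_base p
  have hlb : ∀ t ∈ Bad, s₀ ≤ t := by
    intro t ht
    by_contra hlt
    exact ht (PP_mono (le_of_not_ge hlt) hPs₀)
  have hne : Bad.Nonempty := ⟨s, hbad⟩
  have hbdd : BddBelow Bad := ⟨s₀, hlb⟩
  set g := sInf Bad with hg
  have hg0 : 0 < g := lt_of_lt_of_le hs₀ (le_csInf hne hlb)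
  have hall : ∀ t : ℝ, t < g → PP p t := by
    intro t ht
    by_contra htb
    exact absurd (csInf_le hbdd htb) (not_le.mpr ht)
  have hPg : PP p g := PP_limit hg0 hall
  obtain ⟨δ, hδ, hPgδ⟩ := PP_open hg0 hPg
  have hge : g + δ ≤ g := by
    rw [hg]
    refine le_csInf hne fun t ht => ?_
    by_contra hlt
    exact ht (PP_mono (le_of_not_ge hlt) hPgδ)
  linarith

end ChainAux

/-- if `(X,d)` is complete and locally compact, then every `d_0`-ball of
finite radius is `d`-precompact. -/
theorem chainMetric_ball_precompact {X : Type*} [MetricSpace X] [CompleteSpace X]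
    [LocallyCompactSpace X] (p : X) (r : ℝ≥0∞) (hr : r ≠ ⊤) :
    IsCompact (closure {y : X | chainMetric p y < r}) := by
  have htb : TotallyBounded {y : X | chainMetric p y < r} := by
    rw [Metric.totallyBounded_iff]
    intro η hη
    obtain ⟨ε, hε, N, hNf, hNc⟩ := PP_all p r.toReal η hη
    refine ⟨N, hNf, ?_⟩
    intro y hy
    refine hNc ?_
    show chainDist ε p y < ENNReal.ofReal r.toReal
    rw [ENNReal.ofReal_toReal hr]
    exact (chainDist_le_chainMetric hε p y).trans_lt hy
  exact htb.closure.isCompact_of_isClosed isClosed_closure
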